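/- Let d : ℝⁿ → ℝ be differentiable at s, c ≥ 0, and f ∈ ℝⁿ. Suppose for all sufficiently small Δt > 0, d(s) ≤ c·Δt + d(s + f·Δt + o(Δt)) where the remainder term satisfies o(Δt)/Δt → 0. Then 0 ≤ c + ∇d(s)ᵀ f. -/

import Mathlib

open Topology Filter Asymptotics

theorem stmt9 {n : ℕ} (d : EuclideanSpace ℝ (Fin n) → ℝ)
    (s : EuclideanSpace ℝ (Fin n)) (hd : DifferentiableAt ℝ d s)
    (c : ℝ) (hc : 0 ≤ c) (f : EuclideanSpace ℝ (Fin n))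
    (r : ℝ → EuclideanSpace ℝ (Fin n))
    (hr : r =o[𝓝[>] (0 : ℝ)] fun t => t)
    (h : ∀ᶠ Δt in 𝓝[>] (0 : ℝ), d s ≤ c * Δt + d (s + Δt • f + r Δt)) :
    0 ≤ c + fderiv ℝ d s f := by
  set L := fderiv ℝ d s with hLdef
  have hF := hd.hasFDerivAt
  set v : ℝ → EuclideanSpace ℝ (Fin n) := fun t => t • f + r t with hv
  -- r tends to 0
  have hr0 : Tendsto r (𝓝[>] (0:ℝ)) (𝓝 0) := by
    have ht : Tendsto (fun t : ℝ => t) (𝓝[>] (0:ℝ)) (𝓝 0) :=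
      tendsto_id.mono_left nhdsWithin_le_nhds
    exact hr.tendsto_zero_of_tendsto ht
  have hvt : Tendsto v (𝓝[>] (0:ℝ)) (𝓝 0) := by
    have h1 : Tendsto (fun t : ℝ => t • f) (𝓝[>] (0:ℝ)) (𝓝 0) := by
      have := ((continuous_id.smul (continuous_const (y := f))).tendsto (0:ℝ)).mono_left
        (nhdsWithin_le_nhds (s := Set.Ioi (0:ℝ)))
      convert this using 2 <;> simp
    simpa using h1.add hr0
  have hmap : Tendsto (fun t => s + v t) (𝓝[>] (0:ℝ)) (𝓝 s) := by
    have := (tendsto_const_nhds (x := s) (f := 𝓝[>] (0:ℝ))).add hvt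
    simpa using this
  have hcomp : (fun t => d (s + v t) - d s - L (v t)) =o[𝓝[>] (0:ℝ)] fun t => v t :=
    ((hF.isLittleO).comp_tendsto hmap).congr (fun t => by simp; rfl) (fun t => by simp)
  have hsf : (fun t : ℝ => t • f) =O[𝓝[>] (0:ℝ)] fun t => t := by
    refine isBigO_iff.mpr ⟨‖f‖, Eventually.of_forall fun t => ?_⟩
    rw [norm_smul]
    simp [mul_comm]
  have hvO : v =O[𝓝[>] (0:ℝ)] fun t => t := hsf.add hr.isBigO
  have key1 : (fun t => d (s + v t) - d s - L (v t)) =o[𝓝[>] (0:ℝ)] fun t => t :=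
    hcomp.trans_isBigO hvO
  have hLr : (fun t => L (r t)) =o[𝓝[>] (0:ℝ)] fun t => t :=
    (L.isBigO_comp r _).trans_isLittleO hr
  have key : (fun t => d (s + v t) - d s - t * L f) =o[𝓝[>] (0:ℝ)] fun t => t := by
    have := key1.add hLr
    have heq : (fun t => d (s + v t) - d s - t * L f)
        = fun t => (d (s + v t) - d s - L (v t)) + L (r t) := by
      funext t
      have : L (v t) = t * L f + L (r t) := by
        simp [hv, map_add, map_smul, smul_eq_mul]
      rw [this]; ring
    rw [heq]
    exact this
  have hq : Tendsto (fun t => (d (s + v t) - d s) / t) (𝓝[>] (0:ℝ)) (𝓝 (L f)) := by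
    have h0 := key.tendsto_div_nhds_zero
    have heq : ∀ᶠ t in 𝓝[>] (0:ℝ),
        (d (s + v t) - d s - t * L f) / t = (d (s + v t) - d s) / t - L f := by
      filter_upwards [self_mem_nhdsWithin] with t ht
      have htne : (t:ℝ) ≠ 0 := ne_of_gt ht
      field_simp
    have h0' : Tendsto (fun t => (d (s + v t) - d s) / t - L f) (𝓝[>] (0:ℝ)) (𝓝 0) :=
      h0.congr' heq
    have := h0'.add (tendsto_const_nhds (x := L f))
    simpa using this
  have hle : ∀ᶠ t in 𝓝[>] (0:ℝ), -c ≤ (d (s + v t) - d s) / t := by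
    filter_upwards [h, self_mem_nhdsWithin] with t ht htpos
    have htpos' : (0:ℝ) < t := htpos
    rw [le_div_iff₀ htpos']
    have : d s ≤ c * t + d (s + v t) := by simpa [hv, add_assoc] using ht
    nlinarith
  have : -c ≤ L f := ge_of_tendsto hq hle
  linarith
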